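/- Let k and r be positive integers with r ≤ k. If a tournament T contains a set of r pairwise arc-disjoint cycles, then T contains a set of r pairwise arc-disjoint cycles each of length at most 2k+1. -/

import Mathlib

variable {V : Type*}

/-- A directed cycle in the digraph with arc relation `A`: a nonempty duplicate-free
list of at least two vertices such that every cyclically-consecutive pair is an arc. -/
structure DCycle (A : V → V → Prop) where
  verts : List V
  two_le : 2 ≤ verts.length
  nodup : verts.Nodup
  arcs_rel : ∀ p ∈ verts.zip (verts.rotate 1), A p.1 p.2

/-- The set of arcs of a cycle (cyclically consecutive pairs of its vertex list). -/
def DCycle.arcs {A : V → V → Prop} (c : DCycle A) : Set (V × V) :=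
  {p | p ∈ c.verts.zip (c.verts.rotate 1)}

/-- Two cycles are arc-disjoint if they share no arc. -/
def ArcDisjoint {A : V → V → Prop} (c₁ c₂ : DCycle A) : Prop :=
  Disjoint c₁.arcs c₂.arcs

/-- A tournament: irreflexive, and between any two distinct vertices exactly one arc. -/
def IsTournament (A : V → V → Prop) : Prop :=
  (∀ v, ¬ A v v) ∧ ∀ u v : V, u ≠ v → (A u v ↔ ¬ A v u)

/-- `F` is a feedback arc set of the digraph with arc relation `A`. -/
def IsFAS (A : V → V → Prop) (F : Set (V × V)) : Prop :=
  (∀ p ∈ F, A p.1 p.2) ∧ IsEmpty (DCycle (fun u v => A u v ∧ (u, v) ∉ F))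

lemma zip_rotate_mem_iff {l : List V} {p : V × V} :
    p ∈ l.zip (l.rotate 1) ↔
      ∃ (i : ℕ) (h : i < l.length),
        p = (l[i]'h, l[(i+1) % l.length]'(Nat.mod_lt _ (by omega))) := by
  rw [List.mem_iff_getElem]
  constructor
  · rintro ⟨i, hi, hp⟩
    have hi' : i < l.length := by simpa using hi
    refine ⟨i, hi', ?_⟩
    rw [← hp, List.getElem_zip, List.getElem_rotate]
  · rintro ⟨i, hi, hp⟩
    refine ⟨i, by simpa using hi, ?_⟩
    rw [List.getElem_zip, List.getElem_rotate, ← hp]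

lemma getElem_idx_congr {l : List V} {i j : ℕ} (h : i = j) (hi : i < l.length) :
    l[i]'hi = l[j]'(h ▸ hi) := by subst h; rfl

lemma DCycle.consec_mem_arcs {A : V → V → Prop} (c : DCycle A) (t : ℕ)
    (ht : t < c.verts.length) :
    (c.verts[t]'ht, c.verts[(t+1) % c.verts.length]'(Nat.mod_lt _ (by omega))) ∈ c.arcs := by
  rw [DCycle.arcs, Set.mem_setOf_eq, zip_rotate_mem_iff]
  exact ⟨t, ht, rfl⟩

/-- The "segment plus chord" cycle: vertices `l[a%n], l[(a+1)%n], …, l[(a+s-1)%n]`,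
closed by the arc from `l[(a+s-1)%n]` to `l[a%n]`. -/
lemma exists_segment {A : V → V → Prop} (c : DCycle A) (a s : ℕ)
    (h2 : 2 ≤ s) (hs : s < c.verts.length)
    (hx : (a + s - 1) % c.verts.length < c.verts.length)
    (hy : a % c.verts.length < c.verts.length)
    (hA : A (c.verts[(a + s - 1) % c.verts.length]'hx) (c.verts[a % c.verts.length]'hy)) :
    ∃ D : DCycle A, D.verts.length = s ∧
      D.arcs ⊆ insert
        ((c.verts[(a + s - 1) % c.verts.length]'hx), (c.verts[a % c.verts.length]'hy))
        c.arcs := by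
  set l := c.verts with hl
  set n := l.length with hn
  have hn0 : 0 < n := by omega
  set m : List V := (l.rotate a).take s with hm
  have hmlen : m.length = s := by
    simp [hm, List.length_take, List.length_rotate, ← hn]
    omega
  have hmget : ∀ (i : ℕ) (h : i < s),
      m[i]'(by omega) = l[(a + i) % n]'(Nat.mod_lt _ hn0) := by
    intro i h
    simp only [hm, List.getElem_take, List.getElem_rotate]
    congr 1
    rw [← hn, Nat.add_comm]
  have hmnd : m.Nodup := ((l.rotate a).take_sublist s).nodup (List.nodup_rotate.mpr c.nodup)
  have hclaim : ∀ p ∈ m.zip (m.rotate 1),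
      p = ((l[(a + s - 1) % n]'hx), (l[a % n]'hy)) ∨ p ∈ c.arcs := by
    intro p hp
    rw [zip_rotate_mem_iff] at hp
    obtain ⟨i, hi, rfl⟩ := hp
    have hi' : i < s := by omega
    have hjlt : (i + 1) % m.length < m.length := Nat.mod_lt _ (by omega)
    have e1 : m[i]'hi = l[(a + i) % n]'(Nat.mod_lt _ hn0) := hmget i hi'
    have e2 : m[(i+1) % m.length]'hjlt
        = l[(a + (i+1) % m.length) % n]'(Nat.mod_lt _ hn0) := hmget _ (by omega)
    by_cases hcase : i + 1 < s
    · right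
      have hj : (i + 1) % m.length = i + 1 := by rw [hmlen]; exact Nat.mod_eq_of_lt hcase
      have e2' : m[(i+1) % m.length]'hjlt = l[((a + i) % n + 1) % n]'(Nat.mod_lt _ hn0) := by
        rw [e2]
        exact getElem_idx_congr (by rw [hj, Nat.mod_add_mod, Nat.add_assoc]) _
      have hmem := c.consec_mem_arcs ((a + i) % n) (Nat.mod_lt _ hn0)
      rw [e1, e2']
      exact hmem
    · left
      have hieq : i = s - 1 := by omega
      have hj : (i + 1) % m.length = 0 := by rw [hmlen]; have : i + 1 = s := by omega
                                             rw [this, Nat.mod_self]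
      have e1' : m[i]'hi = l[(a + s - 1) % n]'hx := by
        rw [e1]
        exact getElem_idx_congr (by have : a + i = a + s - 1 := by omega
                                    rw [this]) _
      have e2' : m[(i+1) % m.length]'hjlt = l[a % n]'hy := by
        rw [e2]; exact getElem_idx_congr (by rw [hj]; simp) _
      rw [e1', e2']
  have harcs : ∀ p ∈ m.zip (m.rotate 1), A p.1 p.2 := by
    intro p hp
    rcases hclaim p hp with h | h
    · rw [h]; exact hA
    · exact c.arcs_rel p h
  refine ⟨⟨m, by omega, hmnd, harcs⟩, hmlen, ?_⟩
  intro p hp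
  rcases hclaim p hp with h | h
  · exact h ▸ Set.mem_insert _ _
  · exact Set.mem_insert_of_mem _ h

noncomputable def dirArc (A : V → V → Prop) (x y : V) : V × V :=
  open Classical in if A x y then (x, y) else (y, x)

lemma add_mod_ne (i t n : ℕ) (ht0 : 0 < t) (htn : t < n) (hin : i < n) : (i + t) % n ≠ i := by
  rcases Nat.lt_or_ge (i + t) n with h | h
  · rw [Nat.mod_eq_of_lt h]; omega
  · have h2 : (i + t) % n = i + t - n := by
      rw [Nat.mod_eq_sub_mod h, Nat.mod_eq_of_lt (by omega)]
    omega

lemma exists_shorter_cycle {A : V → V → Prop} (hT : IsTournament A) (c : DCycle A)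
    (i d : ℕ) (hi : i < c.verts.length) (hd : d + 4 ≤ c.verts.length) :
    ∃ D : DCycle A, 2 ≤ D.verts.length ∧ D.verts.length < c.verts.length ∧
      D.arcs ⊆ insert
        (dirArc A (c.verts[i]'hi)
          (c.verts[(i + 2 + d) % c.verts.length]'(Nat.mod_lt _ (by omega)))) c.arcs := by
  classical
  set l := c.verts with hl
  set n := l.length with hn
  have hn0 : 0 < n := by omega
  have hnc : c.verts.length = n := rfl
  set j : ℕ := (i + 2 + d) % n with hj
  have hjlt : j < n := Nat.mod_lt _ hn0
  have hji : j ≠ i := by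
    rw [hj, show i + 2 + d = i + (2 + d) by ring]
    exact add_mod_ne i (2 + d) n (by omega) (by omega) hi
  set x := l[i]'hi with hxdef
  set y := l[j]'hjlt with hydef
  have hxy : x ≠ y := by
    rw [hxdef, hydef, ne_eq, (c.nodup).getElem_inj_iff]
    omega
  by_cases hA : A x y
  · -- chord x → y ; take the segment from j around to i
    have hs2 : 2 ≤ n - 1 - d := by omega
    have hssn : n - 1 - d < n := by omega
    have hidx : (j + (n - 1 - d) - 1) % n = i := by
      have h1 : j + (n - 1 - d) - 1 = j + (n - 2 - d) := by omega
      rw [h1, hj, Nat.mod_add_mod, show i + 2 + d + (n - 2 - d) = i + n by omega,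
        Nat.add_mod_right, Nat.mod_eq_of_lt hi]
    have hidy : j % n = j := Nat.mod_eq_of_lt hjlt
    obtain ⟨D, hDlen, hDsub⟩ := exists_segment c j (n - 1 - d) hs2 hssn
      (by rw [hidx]; exact hi) (by rw [hidy]; exact hjlt)
      (by
        have e1 : l[(j + (n - 1 - d) - 1) % n]'(by rw [hidx]; exact hi) = x := by
          rw [hxdef]; exact getElem_idx_congr hidx _
        have e2 : l[j % n]'(by rw [hidy]; exact hjlt) = y := by
          rw [hydef]; exact getElem_idx_congr hidy _
        rw [e1, e2]; exact hA)
    refine ⟨D, by omega, by omega, ?_⟩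
    have e1 : l[(j + (n - 1 - d) - 1) % n]'(by rw [hidx]; exact hi) = x := by
      rw [hxdef]; exact getElem_idx_congr hidx _
    have e2 : l[j % n]'(by rw [hidy]; exact hjlt) = y := by
      rw [hydef]; exact getElem_idx_congr hidy _
    have : dirArc A x y = (x, y) := by rw [dirArc, if_pos hA]
    rw [this]
    rw [e1, e2] at hDsub
    exact hDsub
  · -- chord y → x ; take the segment from i to j
    have hAyx : A y x := (hT.2 y x (Ne.symm hxy)).mpr hA
    have hs2 : 2 ≤ d + 3 := by omega
    have hssn : d + 3 < n := by omega
    have hidx : (i + (d + 3) - 1) % n = j := by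
      rw [show i + (d + 3) - 1 = i + 2 + d by omega, hj]
    have hidy : i % n = i := Nat.mod_eq_of_lt hi
    obtain ⟨D, hDlen, hDsub⟩ := exists_segment c i (d + 3) hs2 hssn
      (by rw [hidx]; exact hjlt) (by rw [hidy]; exact hi)
      (by
        have e1 : l[(i + (d + 3) - 1) % n]'(by rw [hidx]; exact hjlt) = y := by
          rw [hydef]; exact getElem_idx_congr hidx _
        have e2 : l[i % n]'(by rw [hidy]; exact hi) = x := by
          rw [hxdef]; exact getElem_idx_congr hidy _
        rw [e1, e2]; exact hAyx)
    refine ⟨D, by omega, by omega, ?_⟩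
    have e1 : l[(i + (d + 3) - 1) % n]'(by rw [hidx]; exact hjlt) = y := by
      rw [hydef]; exact getElem_idx_congr hidx _
    have e2 : l[i % n]'(by rw [hidy]; exact hi) = x := by
      rw [hxdef]; exact getElem_idx_congr hidy _
    have : dirArc A x y = (y, x) := by rw [dirArc, if_neg hA]
    rw [this]
    rw [e1, e2] at hDsub
    exact hDsub


lemma eq_of_mod_eq' {x y n : ℕ} (h : x % n = y % n) (h1 : x < y + n) (h2 : y < x + n) :
    x = y := by
  rcases le_total x y with hle | hle
  · have hd : n ∣ y - x := (Nat.modEq_iff_dvd' hle).mp h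
    have h3 : y - x = 0 := Nat.eq_zero_of_dvd_of_lt hd (by omega)
    omega
  · have hd : n ∣ x - y := (Nat.modEq_iff_dvd' hle).mp h.symm
    have h3 : x - y = 0 := Nat.eq_zero_of_dvd_of_lt hd (by omega)
    omega

lemma dvd_of_add_mod_eq {i z n : ℕ} (h : (i + z) % n = i % n) : n ∣ z := by
  have h2 : i + z ≡ i + 0 [MOD n] := by simpa [Nat.ModEq] using h
  exact Nat.modEq_zero_iff_dvd.mp (Nat.ModEq.add_left_cancel' i h2)


/-- If a tournament contains `r ≤ k` arc-disjoint cycles, then it contains `r`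
arc-disjoint cycles each of length at most `2k+1`. -/
theorem stmt1 [Fintype V] (A : V → V → Prop) (hT : IsTournament A)
    (k r : ℕ) (hk : 0 < k) (hr : 0 < r) (hrk : r ≤ k)
    (c : Fin r → DCycle A) (hdisj : ∀ i j, i ≠ j → ArcDisjoint (c i) (c j)) :
    ∃ c' : Fin r → DCycle A, (∀ i j, i ≠ j → ArcDisjoint (c' i) (c' j)) ∧
      ∀ i, (c' i).verts.length ≤ 2 * k + 1 := by
  classical
  set tot : (Fin r → DCycle A) → ℕ := fun f => ∑ i, (f i).verts.length with htot
  set Good : (Fin r → DCycle A) → Prop :=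
    fun f => ∀ i j, i ≠ j → ArcDisjoint (f i) (f j) with hGoodDef
  have hSne : {n | ∃ f, Good f ∧ tot f = n}.Nonempty := ⟨tot c, c, hdisj, rfl⟩
  obtain ⟨f, hGood, hft⟩ := Nat.sInf_mem hSne
  refine ⟨f, hGood, ?_⟩
  by_contra hbad
  push_neg at hbad
  obtain ⟨ibad, hibad⟩ := hbad
  haveI : Nonempty (Fin r) := ⟨⟨0, hr⟩⟩
  obtain ⟨i₀, hmax⟩ := Finite.exists_max (fun t => (f t).verts.length)
  set l₀ := (f i₀).verts with hl₀
  set M := l₀.length with hMdef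
  have hMc : (f i₀).verts.length = M := rfl
  have hl₀nd : l₀.Nodup := (f i₀).nodup
  clear_value l₀
  clear_value M
  have hM4 : 2 * k + 2 ≤ M := le_trans (by omega) (hmax ibad)
  have hM0 : 0 < M := by omega
  have hlM : l₀.length = M := hMdef.symm
  -- the union of arcs of the other cycles, as a finset
  set U : Finset (V × V) :=
    (Finset.univ.erase i₀).biUnion
      (fun t => ((f t).verts.zip ((f t).verts.rotate 1)).toFinset) with hU
  -- every "chord" of the longest cycle is blocked by some other cycle
  have hblocked : ∀ (i : Fin M) (d : Fin (M - 3)),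
      dirArc A (l₀[i.val]'(by rw [hlM]; exact i.isLt))
        (l₀[(i.val + 2 + d.val) % M]'(by rw [hlM]; exact Nat.mod_lt _ hM0)) ∈ U := by
    intro i d
    by_contra hfree
    obtain ⟨D, hD2, hDlt, hDsub⟩ :=
      exists_shorter_cycle hT (f i₀) i.val d.val (by rw [hMc]; exact i.isLt)
        (by rw [hMc]; have := d.isLt; omega)
    have hch1 : ((f i₀).verts[(i.val : ℕ)]'(by rw [hMc]; exact i.isLt))
        = (l₀[(i.val : ℕ)]'(by rw [hlM]; exact i.isLt)) := by
      simp only [hl₀]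
    have hch2 : ((f i₀).verts[(i.val + 2 + d.val) % (f i₀).verts.length]'
          (Nat.mod_lt _ (by rw [hMc]; omega)))
        = (l₀[(i.val + 2 + d.val) % M]'(by rw [hlM]; exact Nat.mod_lt _ hM0)) := by
      simp only [hl₀]
      exact getElem_idx_congr (by rw [hMc]) _
    rw [hch1, hch2] at hDsub
    set f' := Function.update f i₀ D with hf'
    have hDdisj : ∀ t, t ≠ i₀ → Disjoint D.arcs ((f t).arcs) := by
      intro t ht
      rw [Set.disjoint_left]
      intro p hp hpt
      rcases hDsub hp with h | h
      · apply hfree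
        rw [hU, Finset.mem_biUnion]
        exact ⟨t, Finset.mem_erase.mpr ⟨ht, Finset.mem_univ t⟩,
          by rw [List.mem_toFinset]; rw [← h]; exact hpt⟩
      · exact (Set.disjoint_left.mp (hGood i₀ t (Ne.symm ht)) h) hpt
    have hGood' : Good f' := by
      intro a b hab
      by_cases ha : a = i₀ <;> by_cases hb : b = i₀
      · exact absurd (ha.trans hb.symm) hab
      · subst ha
        rw [hf']
        rw [ArcDisjoint, Function.update_self, Function.update_of_ne hb]
        exact hDdisj b hb
      · subst hb
        rw [hf']
        rw [ArcDisjoint, Function.update_self, Function.update_of_ne ha]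
        exact (hDdisj a ha).symm
      · rw [hf', ArcDisjoint, Function.update_of_ne ha, Function.update_of_ne hb]
        exact hGood a b hab
    have hsplit : ∀ (h : Fin r → DCycle A),
        tot h = (h i₀).verts.length + ∑ t ∈ Finset.univ.erase i₀, (h t).verts.length := by
      intro h
      rw [htot]
      exact (Finset.add_sum_erase _ _ (Finset.mem_univ i₀)).symm
    have h1 : tot f' = D.verts.length + ∑ t ∈ Finset.univ.erase i₀, (f t).verts.length := by
      rw [hsplit f']
      congr 1
      · rw [hf', Function.update_self]
      · exact Finset.sum_congr rfl
          (fun t ht => by rw [hf', Function.update_of_ne (Finset.mem_erase.mp ht).1])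
    have h2 := hsplit f
    have hlt : tot f' < tot f := by
      have : D.verts.length < (f i₀).verts.length := hDlt
      omega
    have hle : sInf {n | ∃ f, Good f ∧ tot f = n} ≤ tot f' :=
      Nat.sInf_le ⟨f', hGood', rfl⟩
    omega
  -- the chord map is at most 2-to-1
  set g : Fin M × Fin (M - 3) → V × V := fun p =>
    dirArc A (l₀[p.1.val]'(by rw [hlM]; exact p.1.isLt))
      (l₀[(p.1.val + 2 + p.2.val) % M]'(by rw [hlM]; exact Nat.mod_lt _ hM0)) with hg
  have himg : Finset.univ.image g ⊆ U := by
    intro a ha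
    rw [Finset.mem_image] at ha
    obtain ⟨p, -, rfl⟩ := ha
    exact hblocked p.1 p.2
  have key : ∀ (p p' : Fin M × Fin (M - 3)), g p' = g p →
      p' = p ∨ p' = (⟨(p.1.val + 2 + p.2.val) % M, Nat.mod_lt _ hM0⟩,
        ⟨M - 4 - p.2.val, by have := p.2.isLt; omega⟩) := by
    rintro ⟨i, d⟩ ⟨i', d'⟩ heq
    have hd1 : d.val < M - 3 := d.isLt
    have hd2 : d'.val < M - 3 := d'.isLt
    have hjlt : (i.val + 2 + d.val) % M < M := Nat.mod_lt _ hM0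
    have hjlt' : (i'.val + 2 + d'.val) % M < M := Nat.mod_lt _ hM0
    set x := l₀[i.val]'(by rw [hlM]; exact i.isLt) with hx
    set y := l₀[(i.val + 2 + d.val) % M]'(by rw [hlM]; exact hjlt) with hy
    set x' := l₀[i'.val]'(by rw [hlM]; exact i'.isLt) with hx'
    set y' := l₀[(i'.val + 2 + d'.val) % M]'(by rw [hlM]; exact hjlt') with hy'
    have hcases : (x' = x ∧ y' = y) ∨ (x' = y ∧ y' = x) := by
      rw [hg] at heq
      change dirArc A x' y' = dirArc A x y at heq
      by_cases h1 : A x' y' <;> by_cases h2 : A x y <;>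
        simp only [dirArc, h1, h2, if_true, if_false, Prod.mk.injEq, if_pos, if_neg,
          not_false_iff] at heq <;> tauto
    have hnd := hl₀nd
    rcases hcases with ⟨hxx, hyy⟩ | ⟨hxy1, hxy2⟩
    · left
      have hii : i'.val = i.val := by
        rw [hx', hx] at hxx; exact hnd.getElem_inj_iff.mp hxx
      have hjj : (i'.val + 2 + d'.val) % M = (i.val + 2 + d.val) % M := by
        rw [hy', hy] at hyy; exact hnd.getElem_inj_iff.mp hyy
      rw [hii] at hjj
      have hdd : i.val + 2 + d'.val = i.val + 2 + d.val :=
        eq_of_mod_eq' hjj (by omega) (by omega)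
      simp only [Prod.mk.injEq]
      exact ⟨Fin.ext hii, Fin.ext (by omega)⟩
    · right
      have hii : i'.val = (i.val + 2 + d.val) % M := by
        rw [hx', hy] at hxy1; exact hnd.getElem_inj_iff.mp hxy1
      have hji : (i'.val + 2 + d'.val) % M = i.val := by
        rw [hy', hx] at hxy2; exact hnd.getElem_inj_iff.mp hxy2
      have hdd : d'.val = M - 4 - d.val := by
        rw [hii, show (i.val + 2 + d.val) % M + 2 + d'.val
            = (i.val + 2 + d.val) % M + (2 + d'.val) by ring, Nat.mod_add_mod] at hji
        have hji2 : (i.val + (2 + d.val + (2 + d'.val))) % M = i.val % M := by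
          rw [show i.val + (2 + d.val + (2 + d'.val)) = i.val + 2 + d.val + (2 + d'.val) by ring,
            hji, Nat.mod_eq_of_lt i.isLt]
        have hdvd : M ∣ 2 + d.val + (2 + d'.val) := dvd_of_add_mod_eq hji2
        obtain ⟨e, he⟩ := hdvd
        have h0 : e ≠ 0 := by rintro rfl; omega
        have h2 : e < 2 := by
          by_contra hcon
          push_neg at hcon
          have : M * 2 ≤ M * e := Nat.mul_le_mul_left M (by omega)
          omega
        have he1 : e = 1 := by omega
        rw [he1, mul_one] at he
        omega
      simp only [Prod.mk.injEq]
      exact ⟨Fin.ext hii, Fin.ext hdd⟩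
  have h2to1 : ∀ a ∈ Finset.univ.image g,
      (Finset.univ.filter (fun p => g p = a)).card ≤ 2 := by
    intro a ha
    rw [Finset.mem_image] at ha
    obtain ⟨p, -, rfl⟩ := ha
    have hsub : (Finset.univ.filter (fun p' => g p' = g p)) ⊆
        {p, (⟨(p.1.val + 2 + p.2.val) % M, Nat.mod_lt _ hM0⟩,
          ⟨M - 4 - p.2.val, by have := p.2.isLt; omega⟩)} := by
      intro p' hp'
      rw [Finset.mem_filter] at hp'
      rcases key p p' hp'.2 with h | h
      · simp [h]
      · simp [h]
    calc (Finset.univ.filter (fun p' => g p' = g p)).card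
        ≤ _ := Finset.card_le_card hsub
      _ ≤ 2 := Finset.card_le_two
  have hcard := Finset.card_le_mul_card_image (Finset.univ : Finset (Fin M × Fin (M-3))) 2 h2to1
  have hcardU : U.card ≤ (r - 1) * M := by
    calc U.card
        ≤ ∑ t ∈ Finset.univ.erase i₀,
            ((f t).verts.zip ((f t).verts.rotate 1)).toFinset.card := Finset.card_biUnion_le
      _ ≤ ∑ _t ∈ Finset.univ.erase i₀, M := by
          apply Finset.sum_le_sum
          intro t ht
          calc ((f t).verts.zip ((f t).verts.rotate 1)).toFinset.card
              ≤ ((f t).verts.zip ((f t).verts.rotate 1)).length := (f t).verts.zip _ |>.toFinset_card_le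
            _ ≤ (f t).verts.length := by
                rw [List.length_zip, List.length_rotate]; omega
            _ ≤ M := hmax t
      _ = (r - 1) * M := by
          rw [Finset.sum_const, smul_eq_mul]
          congr 1
          rw [Finset.card_erase_of_mem (Finset.mem_univ i₀), Finset.card_univ, Fintype.card_fin]
  have himgcard : (Finset.univ.image g).card ≤ (r - 1) * M :=
    le_trans (Finset.card_le_card himg) hcardU
  have huniv : (Finset.univ : Finset (Fin M × Fin (M - 3))).card = M * (M - 3) := by
    simp [Finset.card_univ]
  have hfin : M * (M - 3) ≤ 2 * ((r - 1) * M) := by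
    calc M * (M - 3) = (Finset.univ : Finset (Fin M × Fin (M - 3))).card := huniv.symm
      _ ≤ 2 * (Finset.univ.image g).card := hcard
      _ ≤ 2 * ((r - 1) * M) := Nat.mul_le_mul_left 2 himgcard
  have hfinal : M - 3 ≤ 2 * (r - 1) := by
    rw [show 2 * ((r - 1) * M) = (2 * (r - 1)) * M by ring, mul_comm M (M - 3)] at hfin
    exact Nat.le_of_mul_le_mul_right hfin hM0
  omega
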